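/- The automorphism group of the Klein bottle group ℤ ⋊ ℤ (with nontrivial action) is isomorphic to (ℤ ⊕ ℤ/2) ⋊ ℤ/2, where the generator of the acting ℤ/2 sends (r, ε) to (-r, ε). -/

import Mathlib

/-- The single relator of the Klein bottle group. -/
def kleinRels : Set (FreeGroup (Fin 2)) :=
  {FreeGroup.of 0 * FreeGroup.of 1 * FreeGroup.of 0 * (FreeGroup.of 1)⁻¹}

/-- The Klein bottle group `⟨a, b | a b a b⁻¹⟩`. -/
abbrev KleinGroup := PresentedGroup kleinRels

/-- The generator `a` (also called `x` or `α`). -/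
def ka : KleinGroup := PresentedGroup.of 0

/-- The generator `b` (also called `y` or `β`). -/
def kb : KleinGroup := PresentedGroup.of 1


/-- The automorphism `(r, ε) ↦ (-r, ε)` of `ℤ ⊕ ℤ/2`, written multiplicatively. -/
def negAut : MulAut (Multiplicative (ℤ × ZMod 2)) :=
  AddEquiv.toMultiplicative ((AddEquiv.neg ℤ).prodCongr (AddEquiv.refl (ZMod 2)))

lemma negAut_sq : (2 : ℤ) • Additive.ofMul negAut = 0 := by
  show Additive.ofMul negAut + Additive.ofMul negAut = 0
  have : negAut * negAut = 1 := by
    ext x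
    all_goals simp [negAut, AddEquiv.prodCongr, Equiv.prodCongr, AddEquiv.neg, Prod.map_map,
      Function.comp_def, MulAut.mul_apply]
    exact neg_neg _
  simpa using congrArg Additive.ofMul this

/-- The action of `ℤ/2` on `ℤ ⊕ ℤ/2` whose generator sends `(r, ε)` to `(-r, ε)`. -/
def kleinTheta : Multiplicative (ZMod 2) →* MulAut (Multiplicative (ℤ × ZMod 2)) :=
  AddMonoidHom.toMultiplicative
    (ZMod.lift 2 ⟨zmultiplesHom _ (Additive.ofMul negAut), by simpa using negAut_sq⟩)


open SemidirectProduct Multiplicative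

/-- Negation automorphism of `Multiplicative ℤ`. -/
def negA : MulAut (Multiplicative ℤ) := AddEquiv.toMultiplicative (AddEquiv.neg ℤ)

lemma negA_sq : negA * negA = 1 := by
  ext x
  simp [negA, AddEquiv.neg]
  exact neg_neg _

def phiG : Multiplicative ℤ →* MulAut (Multiplicative ℤ) := zpowersHom _ negA

abbrev Gk := Multiplicative ℤ ⋊[phiG] Multiplicative ℤ

lemma phiG_apply (n : Multiplicative ℤ) (m : Multiplicative ℤ) :
    phiG n m = ofAdd (if Even (toAdd n) then toAdd m else -(toAdd m)) := by
  have key : ∀ k : ℤ, negA ^ (2 * k) = 1 := by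
    intro k
    have h2 : negA ^ (2:ℤ) = 1 := by rw [zpow_two, negA_sq]
    rw [zpow_mul, h2, one_zpow]
  have hph : phiG n = negA ^ (toAdd n) := rfl
  rcases Int.even_or_odd (toAdd n) with ⟨k, hk⟩ | ⟨k, hk⟩
  · rw [hph, if_pos ⟨k, hk⟩, hk, show k + k = 2 * k by ring, key]
    rfl
  · rw [hph, hk, if_neg (by simp [Int.even_add_one, parity_simps]),
      zpow_add, key, one_mul, zpow_one]
    rfl

/-- First (normal) coordinate of an element of `Gk`. -/
def cL (g : Gk) : ℤ := toAdd g.left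
/-- Second coordinate of an element of `Gk`. -/
def cR (g : Gk) : ℤ := toAdd g.right

lemma Gk.ext' {g h : Gk} (h1 : cL g = cL h) (h2 : cR g = cR h) : g = h := by
  apply SemidirectProduct.ext
  · exact toAdd.injective h1
  · exact toAdd.injective h2

@[simp] lemma cL_mul (g h : Gk) :
    cL (g * h) = cL g + if Even (cR g) then cL h else -(cL h) := by
  show toAdd (g.left * phiG g.right h.left) = _
  rw [phiG_apply]
  simp [cL, cR]

@[simp] lemma cR_mul (g h : Gk) : cR (g * h) = cR g + cR h := rfl

@[simp] lemma cL_one : cL 1 = 0 := rfl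
@[simp] lemma cR_one : cR 1 = 0 := rfl

def GA : Gk := inl (ofAdd 1)
def GB : Gk := inr (ofAdd 1)

@[simp] lemma cL_GA : cL GA = 1 := rfl
@[simp] lemma cR_GA : cR GA = 0 := rfl
@[simp] lemma cL_GB : cL GB = 0 := rfl
@[simp] lemma cR_GB : cR GB = 1 := rfl

lemma ofAdd_pow (m : ℤ) : (ofAdd m : Multiplicative ℤ) = (ofAdd 1) ^ m := by
  simp [← ofAdd_zsmul]

lemma GA_zpow (m : ℤ) : GA ^ m = inl (ofAdd m) := by
  rw [GA, ofAdd_pow m, map_zpow]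

lemma GB_zpow (n : ℤ) : GB ^ n = inr (ofAdd n) := by
  rw [GB, ofAdd_pow n, map_zpow]

@[simp] lemma cL_GA_zpow (m : ℤ) : cL (GA ^ m) = m := by rw [GA_zpow]; rfl
@[simp] lemma cR_GA_zpow (m : ℤ) : cR (GA ^ m) = 0 := by rw [GA_zpow]; rfl
@[simp] lemma cL_GB_zpow (n : ℤ) : cL (GB ^ n) = 0 := by rw [GB_zpow]; rfl
@[simp] lemma cR_GB_zpow (n : ℤ) : cR (GB ^ n) = n := by rw [GB_zpow]; rfl

lemma Gk_decomp (g : Gk) : g = GA ^ (cL g) * GB ^ (cR g) := by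
  apply Gk.ext' <;> simp

lemma Gk_homext {H : Type*} [Group H] {f g : Gk →* H}
    (hA : f GA = g GA) (hB : f GB = g GB) : f = g := by
  apply SemidirectProduct.hom_ext
  · exact MonoidHom.ext_mint hA
  · exact MonoidHom.ext_mint hB

lemma even_mul_odd {d b : ℤ} (hd : Odd d) : Even (d * b) ↔ Even b := by
  rw [Int.even_mul]
  simp [Int.not_even_iff_odd.2 hd]

def endoFun (e r d : ℤ) (g : Gk) : Gk :=
  ⟨ofAdd (e * cL g + if Even (cR g) then 0 else r), ofAdd (d * cR g)⟩

@[simp] lemma cL_endoFun (e r d : ℤ) (g : Gk) :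
    cL (endoFun e r d g) = e * cL g + if Even (cR g) then 0 else r := rfl
@[simp] lemma cR_endoFun (e r d : ℤ) (g : Gk) :
    cR (endoFun e r d g) = d * cR g := rfl

/-- The endomorphism of `Gk` sending `A ↦ A^e`, `B ↦ A^r B^d`. -/
def endo (e r d : ℤ) (hd : Odd d) : Gk →* Gk where
  toFun := endoFun e r d
  map_one' := by apply Gk.ext' <;> simp
  map_mul' g h := by
    apply Gk.ext' <;>
      simp only [cL_endoFun, cR_endoFun, cL_mul, cR_mul, even_mul_odd hd]
    · rcases Int.even_or_odd (cR g) with hb | hb <;>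
        rcases Int.even_or_odd (cR h) with hb' | hb' <;>
          simp [hb, hb', Int.even_add, Int.not_even_iff_odd.2] <;> ring
    · ring

lemma endo_GA (e r d : ℤ) (hd : Odd d) : endo e r d hd GA = GA ^ e := by
  apply Gk.ext' <;> simp [endo]

lemma endo_GB (e r d : ℤ) (hd : Odd d) : endo e r d hd GB = GA ^ r * GB ^ d := by
  apply Gk.ext' <;> simp [endo]

lemma pm_odd {e : ℤ} (he : e = 1 ∨ e = -1) : Odd e := by
  rcases he with rfl | rfl <;> decide

/-- The automorphism of `Gk` sending `A ↦ A^e`, `B ↦ A^r B^d`, for `e, d = ±1`. -/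
def autG (e r d : ℤ) (he : e = 1 ∨ e = -1) (hd : d = 1 ∨ d = -1) : MulAut Gk where
  toFun := endo e r d (pm_odd hd)
  invFun := endo e (-(e * r)) d (pm_odd hd)
  left_inv g := by
    apply Gk.ext' <;>
      simp only [endo, MonoidHom.coe_mk, OneHom.coe_mk, cL_endoFun, cR_endoFun,
        even_mul_odd (pm_odd hd)]
    · rcases he with rfl | rfl <;> split_ifs <;> ring
    · rcases hd with rfl | rfl <;> ring
  right_inv g := by
    apply Gk.ext' <;>
      simp only [endo, MonoidHom.coe_mk, OneHom.coe_mk, cL_endoFun, cR_endoFun,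
        even_mul_odd (pm_odd hd)]
    · rcases he with rfl | rfl <;> split_ifs <;> ring
    · rcases hd with rfl | rfl <;> ring
  map_mul' := (endo e r d (pm_odd hd)).map_mul

lemma autG_apply_GA (e r d : ℤ) (he) (hd) : autG e r d he hd GA = GA ^ e := endo_GA e r d (pm_odd hd)
lemma autG_apply_GB (e r d : ℤ) (he) (hd) : autG e r d he hd GB = GA ^ r * GB ^ d := endo_GB e r d (pm_odd hd)

lemma aut_eq {u v : MulAut Gk} (hA : u GA = v GA) (hB : u GB = v GB) : u = v := by
  have h := Gk_homext (f := u.toMonoidHom) (g := v.toMonoidHom) hA hB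
  exact MulEquiv.ext fun x => DFunLike.congr_fun h x

abbrev Pk := Multiplicative (ℤ × ZMod 2) ⋊[kleinTheta] Multiplicative (ZMod 2)

lemma kleinTheta_apply' (x : ZMod 2) :
    kleinTheta (ofAdd x) = Additive.toMul (ZMod.lift 2
      ⟨zmultiplesHom _ (Additive.ofMul negAut), by simpa using negAut_sq⟩ x) := rfl

lemma kleinTheta_one : kleinTheta (ofAdd (1 : ZMod 2)) = negAut := by
  rw [kleinTheta_apply', show (1 : ZMod 2) = ((1 : ℤ) : ZMod 2) by decide, ZMod.lift_coe]
  show Additive.toMul ((1 : ℤ) • Additive.ofMul negAut) = negAut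
  simp

lemma kleinTheta_coords (c : ZMod 2) (x : Multiplicative (ℤ × ZMod 2)) :
    toAdd (kleinTheta (ofAdd c) x)
      = (if c = 0 then (toAdd x).1 else -(toAdd x).1, (toAdd x).2) := by
  rcases (show c = 0 ∨ c = 1 by revert c; decide) with rfl | rfl
  · norm_num
  · rw [kleinTheta_one]
    norm_num [negAut, AddEquiv.neg]
    rfl

@[simp] lemma cR_inv (g : Gk) : cR g⁻¹ = -(cR g) := rfl

@[simp] lemma cL_inv (g : Gk) : cL g⁻¹ = if Even (cR g) then -(cL g) else cL g := by
  show toAdd (phiG g.right⁻¹ g.left⁻¹) = _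
  rw [phiG_apply]
  simp [cL, cR]

lemma pm_zpow (g : Gk) {t : ℤ} (ht : t = 1 ∨ t = -1) (hodd : Odd (cR g)) :
    g ^ t = GA ^ (cL g) * GB ^ (t * cR g) := by
  rcases ht with rfl | rfl
  · rw [zpow_one, one_mul]
    exact Gk_decomp g
  · rw [zpow_neg, zpow_one]
    apply Gk.ext' <;> simp [Int.not_even_iff_odd.2 hodd]

def sg (c : ZMod 2) : ℤ := if c = 0 then 1 else -1

lemma sg_pm (c : ZMod 2) : sg c = 1 ∨ sg c = -1 := by revert c; decide
lemma sg_add (c c' : ZMod 2) : sg (c + c') = sg c * sg c' := by revert c c'; decide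
lemma sg_inj {c c' : ZMod 2} (h : sg c = sg c') : c = c' := by revert c c' ; decide
lemma sg_zero : sg 0 = 1 := rfl

def encode (p : Pk) : MulAut Gk :=
  autG (sg (toAdd p.right)) (toAdd p.left).1 (sg (toAdd p.left).2) (sg_pm _) (sg_pm _)

lemma encode_GA (p : Pk) : encode p GA = GA ^ (sg (toAdd p.right)) := autG_apply_GA ..
lemma encode_GB (p : Pk) :
    encode p GB = GA ^ ((toAdd p.left).1) * GB ^ (sg (toAdd p.left).2) := autG_apply_GB ..

lemma sg_odd (c : ZMod 2) : Odd (sg c) := by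
  rcases sg_pm c with h | h <;> rw [h] <;> decide

lemma encode_mul (p q : Pk) : encode (p * q) = encode p * encode q := by
  apply aut_eq
  · rw [MulAut.mul_apply, encode_GA, encode_GA, map_zpow, encode_GA, ← zpow_mul]
    rw [mul_right]
    show GA ^ (sg (toAdd (p.right) + toAdd (q.right))) = _
    rw [sg_add, mul_comm]
  · rw [MulAut.mul_apply, encode_GB, encode_GB, map_mul, map_zpow, map_zpow,
      encode_GA, encode_GB, ← zpow_mul,
      pm_zpow (GA ^ ((toAdd p.left).1) * GB ^ (sg (toAdd p.left).2)) (sg_pm _)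
        (by simp [sg_odd])]
    have hl : toAdd ((p * q).left)
        = toAdd p.left + toAdd (kleinTheta p.right (q.left)) := by
      show toAdd (p.left * _) = _
      rw [toAdd_mul]
    have hth := kleinTheta_coords (toAdd p.right) (q.left)
    rw [ofAdd_toAdd] at hth
    rw [hl, hth]
    apply Gk.ext' <;>
      simp only [cL_mul, cR_mul, cL_GA_zpow, cR_GA_zpow, cL_GB_zpow, cR_GB_zpow,
        Prod.fst_add, Prod.snd_add, sg_add]
    · rcases eq_or_ne (toAdd p.right) 0 with h | h <;> simp [h, sg] <;> ring
    · ring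

def encodeHom : Pk →* MulAut Gk := MonoidHom.mk' encode encode_mul

@[simp] lemma cR_zpow (g : Gk) (t : ℤ) : cR (g ^ t) = t * cR g := by
  have : cR (g ^ t) = toAdd (rightHom (g ^ t)) := rfl
  rw [this, map_zpow]
  simp [cR, rightHom, mul_comm]

lemma encode_injective : Function.Injective encodeHom := by
  intro p q h
  have hA := congrArg (fun u : MulAut Gk => cL (u GA)) h
  have hB1 := congrArg (fun u : MulAut Gk => cL (u GB)) h
  have hB2 := congrArg (fun u : MulAut Gk => cR (u GB)) h
  simp only [encodeHom, MonoidHom.mk'_apply, encode_GA, encode_GB] at hA hB1 hB2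
  simp only [cL_mul, cR_mul, cL_GA_zpow, cR_GA_zpow, cL_GB_zpow, cR_GB_zpow] at hA hB1 hB2
  apply SemidirectProduct.ext
  · apply toAdd.injective
    apply Prod.ext
    · simpa using hB1
    · exact sg_inj (by simpa using hB2)
  · exact toAdd.injective (sg_inj hA)

lemma GAB_rel : GA * GB * GA = GB := by
  apply Gk.ext' <;> simp [cL_mul, cR_mul]

lemma aut_GA_cR (u : MulAut Gk) : cR (u GA) = 0 := by
  have h1 : u GA * u GB * u GA = u GB := by
    rw [← map_mul, ← map_mul, GAB_rel]
  have := congrArg cR h1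
  simp only [cR_mul] at this
  omega

lemma aut_GA_eq (u : MulAut Gk) : u GA = GA ^ (cL (u GA)) := by
  have h := Gk_decomp (u GA)
  rwa [aut_GA_cR, zpow_zero, mul_one] at h

lemma aut_GA_pm (u : MulAut Gk) : cL (u GA) = 1 ∨ cL (u GA) = -1 := by
  have h : GA = u ((u⁻¹ : MulAut Gk) GA) := by simp
  rw [aut_GA_eq (u⁻¹), map_zpow, aut_GA_eq u, ← zpow_mul] at h
  have := congrArg cL h
  rw [cL_GA, cL_GA_zpow] at this
  exact (Int.mul_eq_one_iff_eq_one_or_neg_one.mp this.symm).imp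
    (fun h => h.1) (fun h => h.1)

lemma aut_GB_cR_odd (u : MulAut Gk) : Odd (cR (u GB)) := by
  have h1 : u GA * u GB * u GA = u GB := by
    rw [← map_mul, ← map_mul, GAB_rel]
  have h2 := congrArg cL h1
  simp only [cL_mul, aut_GA_cR, cR_mul] at h2
  rcases Int.even_or_odd (cR (u GB)) with he | ho
  · exfalso
    rcases aut_GA_pm u with hm | hm <;>
      simp [he, hm, Int.even_add] at h2 <;> omega
  · exact ho

lemma aut_GB_cR_pm (u : MulAut Gk) : cR (u GB) = 1 ∨ cR (u GB) = -1 := by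
  have h : GB = u ((u⁻¹ : MulAut Gk) GB) := by simp
  rw [Gk_decomp ((u⁻¹ : MulAut Gk) GB), map_mul, map_zpow, map_zpow] at h
  have h2 := congrArg cR h
  simp only [cR_GB, cR_mul, cR_zpow, aut_GA_cR, mul_zero, zero_add] at h2
  exact (Int.mul_eq_one_iff_eq_one_or_neg_one.mp h2.symm).imp
    (fun h => h.2) (fun h => h.2)

lemma encode_surjective : Function.Surjective encodeHom := by
  intro u
  refine ⟨⟨ofAdd (cL (u GB), if cR (u GB) = 1 then 0 else 1),
    ofAdd (if cL (u GA) = 1 then 0 else 1)⟩, ?_⟩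
  apply aut_eq
  · show encode _ GA = u GA
    rw [encode_GA, aut_GA_eq u]
    rcases aut_GA_pm u with hm | hm <;> rw [hm] <;> simp [sg]
  · show encode _ GB = u GB
    rw [encode_GB]
    have hd := Gk_decomp (u GB)
    rcases aut_GB_cR_pm u with hs | hs <;>
      · rw [hs] at hd
        rw [hs]
        simpa [sg] using hd.symm

/-- `Pk` is isomorphic to the automorphism group of `Gk`. -/
noncomputable def encodeEquiv : Pk ≃* MulAut Gk :=
  MulEquiv.ofBijective encodeHom ⟨encode_injective, encode_surjective⟩

lemma k_rel : ka * kb * ka * kb⁻¹ = 1 := by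
  have h : (PresentedGroup.mk kleinRels)
      (FreeGroup.of 0 * FreeGroup.of 1 * FreeGroup.of 0 * (FreeGroup.of 1)⁻¹) = 1 := by
    apply (QuotientGroup.eq_one_iff _).mpr
    exact Subgroup.subset_normalClosure (by simp [kleinRels])
  simpa [ka, kb, PresentedGroup.of, map_mul, map_inv] using h

lemma kabk : ka * kb * ka = kb := mul_inv_eq_one.mp k_rel

lemma kba : kb * ka = ka⁻¹ * kb := by
  conv_rhs => rw [← kabk]
  group

lemma kb_conj : kb * ka * kb⁻¹ = ka⁻¹ := by
  rw [kba]
  group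

lemma kb_conj_inv : kb * ka⁻¹ * kb⁻¹ = ka := by
  calc kb * ka⁻¹ * kb⁻¹ = (kb * ka * kb⁻¹)⁻¹ := by group
  _ = ka := by rw [kb_conj]; group

lemma kbainv : kb * ka⁻¹ = ka * kb := by
  conv_rhs => rw [← kb_conj_inv]
  group

lemma kb_comm : Commute (kb ^ (2 : ℤ)) ka := by
  show kb ^ (2:ℤ) * ka = ka * kb ^ (2:ℤ)
  rw [zpow_two, mul_assoc, kba, ← mul_assoc, kbainv]
  group

lemma kconj (n m : ℤ) :
    kb ^ n * ka ^ m * (kb ^ n)⁻¹ = ka ^ (if Even n then m else -m) := by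
  have base : ∀ m' : ℤ, kb * ka ^ m' * kb⁻¹ = ka ^ (-m') := by
    intro m'
    have := map_zpow (MulAut.conj kb) ka m'
    simp only [MulAut.conj_apply, kb_conj] at this
    rw [this]
    group
  have even_case : ∀ t : ℤ, ∀ m' : ℤ, kb ^ (2*t) * ka ^ m' * (kb ^ (2*t))⁻¹ = ka ^ m' := by
    intro t m'
    have hc : Commute (kb ^ (2*t : ℤ)) (ka ^ m') := by
      have : kb ^ (2*t : ℤ) = (kb ^ (2:ℤ)) ^ t := by rw [← zpow_mul]
      rw [this]
      exact (kb_comm.zpow_left t).zpow_right m'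
    rw [hc.eq]
    group
  rcases Int.even_or_odd n with ⟨t, ht⟩ | ⟨t, ht⟩
  · rw [if_pos ⟨t, ht⟩, ht, show t + t = 2*t by ring, even_case]
  · rw [if_neg (by rw [ht]; simp [Int.even_add_one, parity_simps]), ht]
    have step : kb ^ (2*t + 1) = kb ^ (2*t : ℤ) * kb := by rw [zpow_add, zpow_one]
    rw [step, mul_inv_rev]
    have : kb ^ (2*t:ℤ) * (kb * ka ^ m * kb⁻¹) * (kb ^ (2*t:ℤ))⁻¹ = ka ^ (-m) := by
      rw [base, even_case]
    rw [← this]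
    group

def kgen : Fin 2 → Gk := ![GA, GB]

lemma kgen_rels : ∀ r ∈ kleinRels, FreeGroup.lift kgen r = 1 := by
  intro r hr
  rw [kleinRels, Set.mem_singleton_iff] at hr
  subst hr
  simp only [map_mul, map_inv, FreeGroup.lift_apply_of]
  show GA * GB * GA * GB⁻¹ = 1
  rw [GAB_rel]
  group

/-- The homomorphism from the Klein bottle group to `Gk`. -/
def toG : KleinGroup →* Gk := PresentedGroup.toGroup kgen_rels

@[simp] lemma toG_ka : toG ka = GA := PresentedGroup.toGroup.of kgen_rels
@[simp] lemma toG_kb : toG kb = GB := PresentedGroup.toGroup.of kgen_rels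

lemma toK_cond : ∀ g : Multiplicative ℤ,
    (zpowersHom KleinGroup ka).comp (phiG g).toMonoidHom
      = (MulAut.conj ((zpowersHom KleinGroup kb) g)).toMonoidHom.comp
          (zpowersHom KleinGroup ka) := by
  intro g
  apply MonoidHom.ext_mint
  show ka ^ (toAdd (phiG g (ofAdd 1)))
    = (kb ^ (toAdd g)) * ka ^ (1:ℤ) * (kb ^ (toAdd g))⁻¹
  rw [phiG_apply, kconj]
  simp

/-- The homomorphism from `Gk` to the Klein bottle group. -/
def toK : Gk →* KleinGroup :=
  SemidirectProduct.lift (zpowersHom KleinGroup ka) (zpowersHom KleinGroup kb) toK_cond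

@[simp] lemma toK_GA : toK GA = ka := by
  show toK (inl (ofAdd 1)) = ka
  rw [toK, lift_inl]
  simp

@[simp] lemma toK_GB : toK GB = kb := by
  show toK (inr (ofAdd 1)) = kb
  rw [toK, lift_inr]
  simp

lemma toG_toK : toG.comp toK = MonoidHom.id Gk := by
  apply Gk_homext <;> simp

lemma toK_toG : toK.comp toG = MonoidHom.id KleinGroup := by
  apply PresentedGroup.ext
  intro x
  fin_cases x
  · show toK (toG ka) = ka
    simp
  · show toK (toG kb) = kb
    simp

/-- The Klein bottle group is isomorphic to `Gk`. -/
def kleinEquiv : KleinGroup ≃* Gk where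
  toFun := toG
  invFun := toK
  left_inv x := DFunLike.congr_fun toK_toG x
  right_inv x := DFunLike.congr_fun toG_toK x
  map_mul' := toG.map_mul

/-- The automorphism group of the Klein bottle group is isomorphic to
`(ℤ ⊕ ℤ/2) ⋊ ℤ/2`, where the generator of the acting `ℤ/2` sends `(r, ε)`
to `(-r, ε)`. -/
theorem stmt7 :
    Nonempty (MulAut KleinGroup ≃*
      Multiplicative (ℤ × ZMod 2) ⋊[kleinTheta] Multiplicative (ZMod 2)) := by
  exact ⟨(MulAut.congr kleinEquiv).trans encodeEquiv.symm⟩
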